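/- arXiv:2112.09771 — 8 statements merged into one kernel-verified Lean document; each statement's English description precedes it below -/
import Mathlib

section
/- Let μ be a probability measure on Ω, let X be the Boolean sensitivity indicator of a record, and let M be the release indicator produced by the OSDPRR mechanism with parameter ε > 0 for X. Assume μ(X = 0) > 0 and μ(X = 1) > 0. Then μ(M = 0) > 0 and the posterior odds satisfy P(X = 0 | M = 0) / P(X = 1 | M = 0) = e^ε · μ(X = 0) / μ(X = 1). -/
open MeasureTheory Real

/-- Conditional probability `P(A | B) = μ(A ∩ B) / μ(B)`, as a real number. -/
noncomputable def condProb {Ω : Type*} [MeasurableSpace Ω] (μ : Measure Ω) (A B : Set Ω) : ℝ :=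
  (μ (A ∩ B)).toReal / (μ B).toReal

/-- For the OSDPRR mechanism with parameter `ε > 0` applied to a record with
sensitivity indicator `X` (X = 1 means non-sensitive, M = 1 means released), the event of
non-release has positive probability and the posterior odds of the record being sensitive given
non-release equal `e^ε` times the prior odds. -/
theorem osdprr_posterior_odds {Ω : Type*} [MeasurableSpace Ω]
    (μ : Measure Ω) [IsProbabilityMeasure μ]
    (X M : Ω → Bool) (hXmeas : Measurable X) (hMmeas : Measurable M)
    (ε : ℝ) (hε : 0 < ε)
    (hX0 : 0 < μ {ω | X ω = false}) (hX1 : 0 < μ {ω | X ω = true})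
    -- OSDPRR: a sensitive record is never released
    (hrel0 : μ {ω | M ω = true ∧ X ω = false} = 0)
    -- OSDPRR: a non-sensitive record is released with probability 1 - e^{-ε}
    (hrel1 : (μ {ω | M ω = true ∧ X ω = true}).toReal
        = (1 - Real.exp (-ε)) * (μ {ω | X ω = true}).toReal) :
    0 < μ {ω | M ω = false} ∧
      condProb μ {ω | X ω = false} {ω | M ω = false}
          / condProb μ {ω | X ω = true} {ω | M ω = false}
        = Real.exp ε * ((μ {ω | X ω = false}).toReal / (μ {ω | X ω = true}).toReal) := by
  have hset0 : {ω | X ω = false} ∩ {ω | M ω = false}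
      = {ω | X ω = false} \ {ω | M ω = true ∧ X ω = false} := by
    ext ω; simp only [Set.mem_inter_iff, Set.mem_diff, Set.mem_setOf_eq]
    cases h : M ω <;> cases h' : X ω <;> simp
  have h0 : μ ({ω | X ω = false} ∩ {ω | M ω = false}) = μ {ω | X ω = false} := by
    rw [hset0, measure_diff_null hrel0]
  have hset1 : {ω | X ω = true} ∩ {ω | M ω = false}
      = {ω | X ω = true} \ {ω | M ω = true ∧ X ω = true} := by
    ext ω; simp only [Set.mem_inter_iff, Set.mem_diff, Set.mem_setOf_eq]
    cases h : M ω <;> cases h' : X ω <;> simp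
  have hsub : {ω | M ω = true ∧ X ω = true} ⊆ {ω | X ω = true} := fun ω h => h.2
  have hmeasMX : MeasurableSet {ω | M ω = true ∧ X ω = true} := by
    have : {ω | M ω = true ∧ X ω = true} = M ⁻¹' {true} ∩ X ⁻¹' {true} := by
      ext ω; simp [Set.mem_setOf_eq]
    rw [this]
    exact (hMmeas (measurableSet_singleton _)).inter (hXmeas (measurableSet_singleton _))
  have hfin : μ {ω | M ω = true ∧ X ω = true} ≠ ⊤ := measure_ne_top μ _
  have h1 : μ ({ω | X ω = true} ∩ {ω | M ω = false})
      = μ {ω | X ω = true} - μ {ω | M ω = true ∧ X ω = true} := by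
    rw [hset1, measure_diff hsub hmeasMX.nullMeasurableSet hfin]
  have h1r : (μ ({ω | X ω = true} ∩ {ω | M ω = false})).toReal
      = Real.exp (-ε) * (μ {ω | X ω = true}).toReal := by
    rw [h1, ENNReal.toReal_sub_of_le (measure_mono hsub) (measure_ne_top μ _), hrel1]
    ring
  have hMpos : 0 < μ {ω | M ω = false} := by
    calc 0 < μ {ω | X ω = false} := hX0
    _ = μ ({ω | X ω = false} ∩ {ω | M ω = false}) := h0.symm
    _ ≤ μ {ω | M ω = false} := measure_mono Set.inter_subset_right
  refine ⟨hMpos, ?_⟩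
  have hMr : 0 < (μ {ω | M ω = false}).toReal :=
    ENNReal.toReal_pos hMpos.ne' (measure_ne_top μ _)
  have hX1r : 0 < (μ {ω | X ω = true}).toReal :=
    ENNReal.toReal_pos hX1.ne' (measure_ne_top μ _)
  have hexp : (0:ℝ) < Real.exp (-ε) := Real.exp_pos _
  unfold condProb
  rw [h0, h1r]
  rw [Real.exp_neg]
  have hE : Real.exp ε ≠ 0 := (Real.exp_pos ε).ne'
  field_simp
end

section
/- Let μ be a probability measure on Ω, let X be the Boolean sensitivity indicator of a record with μ(X = 0) > 0 and μ(X = 1) > 0, and let M⁽¹⁾, …, M⁽ⁿ⁾ be n release indicators, each produced by the OSDPRR mechanism with parameter ε > 0 for X, which are mutually conditionally independent given X, i.e. for every vector m ∈ {0,1}ⁿ and every a ∈ {0,1}: μ(⋂ₖ {M⁽ᵏ⁾ = mₖ} ∧ X = a)·μ(X = a)^{n−1} = ∏ₖ μ(M⁽ᵏ⁾ = mₖ ∧ X = a). Let E be the event that M⁽ᵏ⁾ = 0 for all k. Then μ(E) > 0 and P(X = 0 | E) / P(X = 1 | E) = e^{nε} · μ(X = 0) / μ(X = 1). -/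
open MeasureTheory Real

/-- If `n` release indicators are each produced by the OSDPRR mechanism with
parameter `ε > 0` for the sensitivity indicator `X`, and they are mutually conditionally
independent given `X`, then the event `E` that none of them releases the record has positive
probability and the posterior odds of the record being sensitive given `E` equal `e^{nε}` times
the prior odds. -/
theorem osdprr_posterior_odds_composition {Ω : Type*} [MeasurableSpace Ω]
    (μ : Measure Ω) [IsProbabilityMeasure μ]
    (X : Ω → Bool) (hXmeas : Measurable X)
    (n : ℕ) (M : Fin n → Ω → Bool) (hMmeas : ∀ k, Measurable (M k))
    (ε : ℝ) (hε : 0 < ε)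
    (hX0 : 0 < μ {ω | X ω = false}) (hX1 : 0 < μ {ω | X ω = true})
    -- each mechanism is an OSDPRR with parameter ε for X
    (hrel0 : ∀ k, μ {ω | M k ω = true ∧ X ω = false} = 0)
    (hrel1 : ∀ k, (μ {ω | M k ω = true ∧ X ω = true}).toReal
        = (1 - Real.exp (-ε)) * (μ {ω | X ω = true}).toReal)
    -- mutual conditional independence given X
    (hCI : ∀ (m : Fin n → Bool) (a : Bool),
      μ {ω | (∀ k, M k ω = m k) ∧ X ω = a} * μ {ω | X ω = a} ^ (n - 1)
        = ∏ k, μ {ω | M k ω = m k ∧ X ω = a}) :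
    0 < μ {ω | ∀ k, M k ω = false} ∧
      condProb μ {ω | X ω = false} {ω | ∀ k, M k ω = false}
          / condProb μ {ω | X ω = true} {ω | ∀ k, M k ω = false}
        = Real.exp (n * ε)
            * ((μ {ω | X ω = false}).toReal / (μ {ω | X ω = true}).toReal) := by
  classical
  have hfin : ∀ s : Set Ω, μ s ≠ ⊤ := fun s => (measure_lt_top μ s).ne
  have hMeasM : ∀ (k : Fin n) (b : Bool), MeasurableSet {ω | M k ω = b} := fun k b =>
    (hMmeas k) (measurableSet_singleton b)
  have hMeasX : ∀ (b : Bool), MeasurableSet {ω | X ω = b} := fun b =>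
    hXmeas (measurableSet_singleton b)
  have hsplit : ∀ (k : Fin n) (a : Bool),
      μ {ω | X ω = a} = μ {ω | M k ω = true ∧ X ω = a} + μ {ω | M k ω = false ∧ X ω = a} := by
    intro k a
    have hU : {ω | X ω = a} =
        {ω | M k ω = true ∧ X ω = a} ∪ {ω | M k ω = false ∧ X ω = a} := by
      ext ω
      simp only [Set.mem_setOf_eq, Set.mem_union]
      cases h : M k ω <;> simp [h] <;> tauto
    have hm : MeasurableSet {ω | M k ω = false ∧ X ω = a} := (hMeasM k false).inter (hMeasX a)
    rw [hU, measure_union _ hm]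
    rw [Set.disjoint_left]
    rintro ω ⟨h1, -⟩ ⟨h2, -⟩
    simp_all
  -- dispose of the degenerate case n = 0
  rcases Nat.eq_zero_or_pos n with hn | hn
  · subst hn
    have h0 := hCI (fun _ => false) false
    have h1 := hCI (fun _ => false) true
    simp [Fin.prod_univ_zero] at h0 h1
    have hd : Disjoint {ω | X ω = false} {ω | X ω = true} := by
      rw [Set.disjoint_left]; intro ω h1 h2; simp_all
    have := measure_union (μ := μ) hd (hMeasX true)
    have hle : μ ({ω | X ω = false} ∪ {ω | X ω = true}) ≤ 1 :=
      (measure_mono (Set.subset_univ _)).trans_eq measure_univ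
    rw [this, h0, h1] at hle
    norm_num at hle
  -- main case: n ≥ 1
  obtain ⟨nn, rfl⟩ : ∃ m, n = m + 1 := ⟨n - 1, (Nat.succ_pred_eq_of_pos hn).symm⟩
  set q : ℝ := Real.exp (-ε) with hqdef
  have hq : 0 < q := Real.exp_pos _
  set p0 : ℝ := (μ {ω | X ω = false}).toReal with hp0def
  set p1 : ℝ := (μ {ω | X ω = true}).toReal with hp1def
  have hp0 : 0 < p0 := ENNReal.toReal_pos hX0.ne' (hfin _)
  have hp1 : 0 < p1 := ENNReal.toReal_pos hX1.ne' (hfin _)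
  have hM0X0 : ∀ k, μ {ω | M k ω = false ∧ X ω = false} = μ {ω | X ω = false} := by
    intro k
    have := hsplit k false
    rw [hrel0 k, zero_add] at this
    exact this.symm
  have hM0X1 : ∀ k, (μ {ω | M k ω = false ∧ X ω = true}).toReal = q * p1 := by
    intro k
    have h := congrArg ENNReal.toReal (hsplit k true)
    rw [ENNReal.toReal_add (hfin _) (hfin _), hrel1 k] at h
    rw [← hp1def] at h
    nlinarith [h]
  -- conditional independence applied to the all-false vector
  have hE0 : (μ {ω | (∀ k, M k ω = false) ∧ X ω = false}).toReal = p0 := by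
    have h := congrArg ENNReal.toReal (hCI (fun _ => false) false)
    rw [ENNReal.toReal_mul, ENNReal.toReal_pow, ENNReal.toReal_prod] at h
    simp only [← hp0def] at h
    have hr : ∀ k ∈ Finset.univ, (μ {ω | M k ω = (fun _ => false) k ∧ X ω = false}).toReal = p0 := by
      intro k _
      show (μ {ω | M k ω = false ∧ X ω = false}).toReal = p0
      rw [hM0X0 k, ← hp0def]
    rw [Finset.prod_congr rfl hr, Finset.prod_const, Finset.card_univ, Fintype.card_fin] at h
    have hpow : p0 ^ (nn + 1) = p0 * p0 ^ (nn + 1 - 1) := by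
      rw [Nat.add_sub_cancel, pow_succ]; ring
    rw [hpow] at h
    exact mul_right_cancel₀ (pow_ne_zero _ hp0.ne') h
  have hE1 : (μ {ω | (∀ k, M k ω = false) ∧ X ω = true}).toReal = q ^ (nn + 1) * p1 := by
    have h := congrArg ENNReal.toReal (hCI (fun _ => false) true)
    rw [ENNReal.toReal_mul, ENNReal.toReal_pow, ENNReal.toReal_prod] at h
    simp only [← hp1def] at h
    have hr : ∀ k ∈ Finset.univ,
        (μ {ω | M k ω = (fun _ => false) k ∧ X ω = true}).toReal = q * p1 := by
      intro k _
      exact hM0X1 k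
    rw [Finset.prod_congr rfl hr, Finset.prod_const, Finset.card_univ, Fintype.card_fin] at h
    have hpow : (q * p1) ^ (nn + 1) = (q ^ (nn + 1) * p1) * p1 ^ (nn + 1 - 1) := by
      rw [Nat.add_sub_cancel, mul_pow, pow_succ, pow_succ]; ring
    rw [hpow] at h
    exact mul_right_cancel₀ (pow_ne_zero _ hp1.ne') h
  -- positivity of E
  have hsub0 : {ω | (∀ k, M k ω = false) ∧ X ω = false} ⊆ {ω | ∀ k, M k ω = false} :=
    fun ω h => h.1
  have hEXpos : 0 < μ {ω | (∀ k, M k ω = false) ∧ X ω = false} := by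
    by_contra h
    push_neg at h
    have : μ {ω | (∀ k, M k ω = false) ∧ X ω = false} = 0 := le_antisymm h (zero_le)
    rw [this] at hE0
    simp at hE0
    exact hp0.ne' hE0.symm
  have hEpos : 0 < μ {ω | ∀ k, M k ω = false} := hEXpos.trans_le (measure_mono hsub0)
  refine ⟨hEpos, ?_⟩
  have hEr : 0 < (μ {ω | ∀ k, M k ω = false}).toReal :=
    ENNReal.toReal_pos hEpos.ne' (hfin _)
  -- rewrite the intersections
  have hset0 : {ω | X ω = false} ∩ {ω | ∀ k, M k ω = false}
      = {ω | (∀ k, M k ω = false) ∧ X ω = false} := Set.ext fun ω => and_comm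
  have hset1 : {ω | X ω = true} ∩ {ω | ∀ k, M k ω = false}
      = {ω | (∀ k, M k ω = false) ∧ X ω = true} := Set.ext fun ω => and_comm
  unfold condProb
  rw [hset0, hset1, hE0, hE1]
  have hqn : Real.exp ((nn + 1 : ℕ) * ε) * q ^ (nn + 1) = 1 := by
    rw [hqdef, ← Real.exp_nat_mul, ← Real.exp_add,
      show ((nn + 1 : ℕ) : ℝ) * ε + ((nn + 1 : ℕ) : ℝ) * (-ε) = 0 by ring, Real.exp_zero]
  have hqnpos : (0:ℝ) < q ^ (nn + 1) := pow_pos hq (nn + 1)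
  have hE' : (μ {ω | ∀ k, M k ω = false}).toReal ≠ 0 := hEr.ne'
  field_simp
  push_cast at hqn
  push_cast
  linear_combination (-1 : ℝ) * hqn
end

section
/- Let μ be a probability measure on Ω, let X be the Boolean sensitivity indicator of a record with μ(X = 0) > 0 and μ(X = 1) > 0, and let M be the release indicator produced by the OSDPRR mechanism with parameter ε > 0 for X. Then the mechanism satisfies ε-freedom from exclusion attacks: for every outcome m ∈ {0,1} with μ(M = m) > 0, P(X = 0 | M = m) / P(X = 1 | M = m) ≤ e^ε · μ(X = 0) / μ(X = 1). -/
open MeasureTheory Real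

/-- The OSDPRR mechanism with parameter `ε > 0` satisfies `ε`-freedom from
exclusion attacks: for every possible outcome `m ∈ {0,1}` of the release indicator with positive
probability, the posterior odds of the record being sensitive given the outcome are at most
`e^ε` times the prior odds. -/
theorem osdprr_freedom_from_exclusion {Ω : Type*} [MeasurableSpace Ω]
    (μ : Measure Ω) [IsProbabilityMeasure μ]
    (X M : Ω → Bool) (hXmeas : Measurable X) (hMmeas : Measurable M)
    (ε : ℝ) (hε : 0 < ε)
    (hX0 : 0 < μ {ω | X ω = false}) (hX1 : 0 < μ {ω | X ω = true})
    -- OSDPRR: a sensitive record is never released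
    (hrel0 : μ {ω | M ω = true ∧ X ω = false} = 0)
    -- OSDPRR: a non-sensitive record is released with probability 1 - e^{-ε}
    (hrel1 : (μ {ω | M ω = true ∧ X ω = true}).toReal
        = (1 - Real.exp (-ε)) * (μ {ω | X ω = true}).toReal) :
    ∀ m : Bool, 0 < μ {ω | M ω = m} →
      condProb μ {ω | X ω = false} {ω | M ω = m}
          / condProb μ {ω | X ω = true} {ω | M ω = m}
        ≤ Real.exp ε * ((μ {ω | X ω = false}).toReal / (μ {ω | X ω = true}).toReal) := by
  intro m hm
  have hA0 : MeasurableSet {ω | X ω = false} := hXmeas (measurableSet_singleton false)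
  have hA1 : MeasurableSet {ω | X ω = true} := hXmeas (measurableSet_singleton true)
  have hMt : MeasurableSet {ω | M ω = true} := hMmeas (measurableSet_singleton true)
  cases m with
  | true =>

    have h0 : μ ({ω | X ω = false} ∩ {ω | M ω = true}) = 0 := by
      rw [show ({ω | X ω = false} ∩ {ω | M ω = true})
          = {ω | M ω = true ∧ X ω = false} by ext ω; simp [Set.mem_inter_iff, and_comm]]
      exact hrel0
    have : condProb μ {ω | X ω = false} {ω | M ω = true} = 0 := by
      simp [condProb, h0]
    rw [this, zero_div]
    positivity
  | false =>

    -- key quantities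
    set a := (μ {ω | X ω = true}).toReal with ha
    set b := (μ {ω | X ω = false}).toReal with hb
    have hfin : ∀ s : Set Ω, μ s ≠ ⊤ := fun s => measure_ne_top μ s
    have hapos : 0 < a := ENNReal.toReal_pos hX1.ne' (hfin _)
    have hbpos : 0 < b := ENNReal.toReal_pos hX0.ne' (hfin _)
    have hMf : {ω | M ω = false} = {ω | M ω = true}ᶜ := by
      ext ω; simp
    -- μ (X=false ∩ M=false) = μ (X=false)
    have hsplit0 : μ ({ω | X ω = false} ∩ {ω | M ω = true})
        + μ ({ω | X ω = false} ∩ {ω | M ω = false}) = μ {ω | X ω = false} := by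
      rw [hMf]
      exact measure_inter_add_diff _ hMt
    have h0 : μ ({ω | X ω = false} ∩ {ω | M ω = true}) = 0 := by
      rw [show ({ω | X ω = false} ∩ {ω | M ω = true})
          = {ω | M ω = true ∧ X ω = false} by ext ω; simp [Set.mem_inter_iff, and_comm]]
      exact hrel0
    have hB : (μ ({ω | X ω = false} ∩ {ω | M ω = false})).toReal = b := by
      rw [hb]
      congr 1
      rw [← hsplit0, h0, zero_add]
    -- μ (X=true ∩ M=false) = e^{-ε} * a
    have hsplit1 : μ ({ω | X ω = true} ∩ {ω | M ω = true})
        + μ ({ω | X ω = true} ∩ {ω | M ω = false}) = μ {ω | X ω = true} := by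
      rw [hMf]
      exact measure_inter_add_diff _ hMt
    have h1eq : (μ ({ω | X ω = true} ∩ {ω | M ω = true})).toReal = (1 - Real.exp (-ε)) * a := by
      rw [show ({ω | X ω = true} ∩ {ω | M ω = true})
          = {ω | M ω = true ∧ X ω = true} by ext ω; simp [Set.mem_inter_iff, and_comm]]
      exact hrel1
    have hA : (μ ({ω | X ω = true} ∩ {ω | M ω = false})).toReal = Real.exp (-ε) * a := by
      have := congrArg ENNReal.toReal hsplit1
      rw [ENNReal.toReal_add (hfin _) (hfin _), h1eq] at this
      linarith [this]
    have hMfpos : (0:ℝ) < (μ {ω | M ω = false}).toReal :=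
      ENNReal.toReal_pos hm.ne' (hfin _)
    have hexp : (0:ℝ) < Real.exp (-ε) := Real.exp_pos _
    rw [condProb, condProb, hA, hB]
    have hexp1 : Real.exp ε * Real.exp (-ε) = 1 := by
      rw [← Real.exp_add]; simp
    have key : b / (μ {ω | M ω = false}).toReal
        / (Real.exp (-ε) * a / (μ {ω | M ω = false}).toReal)
        = Real.exp ε * (b / a) := by
      field_simp
      nlinarith [hexp1, mul_pos hbpos hapos]
    rw [key]
end

section
/- Let μ be a probability measure on Ω, let Xᵢ, Xⱼ be Boolean sensitivity indicators with μ(Xᵢ = a ∧ Xⱼ = b) > 0 for all a, b ∈ {0,1}, and let Mᵢ be the release indicator produced by the OSDPRR mechanism with parameter εᵢ > 0 for Xᵢ, with Mᵢ conditionally independent of Xⱼ given Xᵢ (for all m, a, b: μ(Mᵢ = m ∧ Xᵢ = a ∧ Xⱼ = b)·μ(Xᵢ = a) = μ(Mᵢ = m ∧ Xᵢ = a)·μ(Xᵢ = a ∧ Xⱼ = b)). Set δ₁ = P(Xᵢ = 0 | Xⱼ = 0) and δ₂ = P(Xᵢ = 0 | Xⱼ = 1). Then P(Xⱼ = 0 |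 Mᵢ = 0) / P(Xⱼ = 1 | Mᵢ = 0) = [(δ₁(e^{εᵢ} − 1) + 1) / (δ₂(e^{εᵢ} − 1) + 1)] · μ(Xⱼ = 0) / μ(Xⱼ = 1). -/
open MeasureTheory Real

/-- Splitting a measure along a Boolean function, real-valued version. -/
lemma bool_split_real {Ω : Type*} [MeasurableSpace Ω] (μ : Measure Ω) [IsFiniteMeasure μ]
    (Y : Ω → Bool) (hY : Measurable Y) (S : Set Ω) :
    (μ (S ∩ {ω | Y ω = false})).toReal + (μ (S ∩ {ω | Y ω = true})).toReal = (μ S).toReal := by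
  have ht : MeasurableSet {ω | Y ω = true} := hY (measurableSet_singleton true)
  have h1 : S ∩ {ω | Y ω = false} = S \ {ω | Y ω = true} := by
    ext ω; cases h : Y ω <;> simp [h]
  rw [← ENNReal.toReal_add (measure_ne_top μ _) (measure_ne_top μ _)]
  congr 1
  rw [h1, add_comm]
  exact measure_inter_add_diff S ht

/-- **Theorem 2, main result.** With `δ₁ = P(Xᵢ = 0 | Xⱼ = 0)` and
`δ₂ = P(Xᵢ = 0 | Xⱼ = 1)`, the information leakage on `Xⱼ` from not releasing record `rᵢ` under
OSDPRR with parameter `εᵢ` is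
`P(Xⱼ=0 | Mᵢ=0) / P(Xⱼ=1 | Mᵢ=0)
  = [(δ₁(e^{εᵢ}−1)+1)/(δ₂(e^{εᵢ}−1)+1)] · P(Xⱼ=0)/P(Xⱼ=1)`. -/
theorem osdprr_dependent_leakage_not_released {Ω : Type*} [MeasurableSpace Ω]
    (μ : Measure Ω) [IsProbabilityMeasure μ]
    (Xi Xj Mi : Ω → Bool)
    (hXi : Measurable Xi) (hXj : Measurable Xj) (hMi : Measurable Mi)
    (εi : ℝ) (hεi : 0 < εi)
    (hpos : ∀ a b : Bool, 0 < μ {ω | Xi ω = a ∧ Xj ω = b})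
    -- OSDPRR for Xᵢ: a sensitive record is never released
    (hrel0 : μ {ω | Mi ω = true ∧ Xi ω = false} = 0)
    -- OSDPRR for Xᵢ: a non-sensitive record is released with probability 1 - e^{-εᵢ}
    (hrel1 : (μ {ω | Mi ω = true ∧ Xi ω = true}).toReal
        = (1 - Real.exp (-εi)) * (μ {ω | Xi ω = true}).toReal)
    -- conditional independence of Mᵢ and Xⱼ given Xᵢ
    (hCI : ∀ m a b : Bool,
      μ {ω | Mi ω = m ∧ Xi ω = a ∧ Xj ω = b} * μ {ω | Xi ω = a}
        = μ {ω | Mi ω = m ∧ Xi ω = a} * μ {ω | Xi ω = a ∧ Xj ω = b}) :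
    condProb μ {ω | Xj ω = false} {ω | Mi ω = false}
        / condProb μ {ω | Xj ω = true} {ω | Mi ω = false}
      = ((condProb μ {ω | Xi ω = false} {ω | Xj ω = false} * (Real.exp εi - 1) + 1)
          / (condProb μ {ω | Xi ω = false} {ω | Xj ω = true} * (Real.exp εi - 1) + 1))
        * ((μ {ω | Xj ω = false}).toReal / (μ {ω | Xj ω = true}).toReal) := by
  -- useful set equalities
  have eXX : ∀ a b : Bool, {ω | Xi ω = a} ∩ {ω | Xj ω = b} = {ω | Xi ω = a ∧ Xj ω = b} := by
    intro a b; ext ω; simp [Set.mem_inter_iff]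
  have eXXj : ∀ a b : Bool, {ω | Xj ω = b} ∩ {ω | Xi ω = a} = {ω | Xi ω = a ∧ Xj ω = b} := by
    intro a b; ext ω; simp [Set.mem_inter_iff]; tauto
  have eXM : ∀ a m : Bool, {ω | Xi ω = a} ∩ {ω | Mi ω = m} = {ω | Mi ω = m ∧ Xi ω = a} := by
    intro a m; ext ω; simp [Set.mem_inter_iff]; tauto
  have eMX : ∀ m a : Bool, {ω | Mi ω = m} ∩ {ω | Xi ω = a} = {ω | Mi ω = m ∧ Xi ω = a} := by
    intro m a; ext ω; simp [Set.mem_inter_iff]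
  have eJMX : ∀ b m a : Bool,
      ({ω | Xj ω = b} ∩ {ω | Mi ω = m}) ∩ {ω | Xi ω = a}
        = {ω | Mi ω = m ∧ Xi ω = a ∧ Xj ω = b} := by
    intro b m a; ext ω; simp [Set.mem_inter_iff]; tauto
  -- real-valued abbreviations
  set p00 := (μ {ω | Xi ω = false ∧ Xj ω = false}).toReal with hp00
  set p01 := (μ {ω | Xi ω = false ∧ Xj ω = true}).toReal with hp01
  set p10 := (μ {ω | Xi ω = true ∧ Xj ω = false}).toReal with hp10
  set p11 := (μ {ω | Xi ω = true ∧ Xj ω = true}).toReal with hp11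
  set q0 := (μ {ω | Xi ω = false}).toReal with hq0
  set q1 := (μ {ω | Xi ω = true}).toReal with hq1
  have hpR : ∀ a b : Bool, 0 < (μ {ω | Xi ω = a ∧ Xj ω = b}).toReal := fun a b =>
    ENNReal.toReal_pos (hpos a b).ne' (measure_ne_top μ _)
  have hp00pos : 0 < p00 := hpR false false
  have hp01pos : 0 < p01 := hpR false true
  have hp10pos : 0 < p10 := hpR true false
  have hp11pos : 0 < p11 := hpR true true
  -- split μ{Xi = a} by Xj
  have hq0eq : q0 = p00 + p01 := by
    rw [hq0, ← bool_split_real μ Xj hXj {ω | Xi ω = false}, eXX false false, eXX false true]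
  have hq1eq : q1 = p10 + p11 := by
    rw [hq1, ← bool_split_real μ Xj hXj {ω | Xi ω = true}, eXX true false, eXX true true]
  have hq0pos : 0 < q0 := by rw [hq0eq]; linarith
  have hq1pos : 0 < q1 := by rw [hq1eq]; linarith
  -- split μ{Xj = b} by Xi
  have hr0eq : (μ {ω | Xj ω = false}).toReal = p00 + p10 := by
    rw [← bool_split_real μ Xi hXi {ω | Xj ω = false}, eXXj false false, eXXj true false]
  have hr1eq : (μ {ω | Xj ω = true}).toReal = p01 + p11 := by
    rw [← bool_split_real μ Xi hXi {ω | Xj ω = true}, eXXj false true, eXXj true true]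
  -- split μ{Xi = a} by Mi
  have hm0 : (μ {ω | Mi ω = false ∧ Xi ω = false}).toReal = q0 := by
    have h := bool_split_real μ Mi hMi {ω | Xi ω = false}
    rw [eXM false false, eXM false true, hrel0] at h
    simpa using h
  have hm1 : (μ {ω | Mi ω = false ∧ Xi ω = true}).toReal = Real.exp (-εi) * q1 := by
    have h := bool_split_real μ Mi hMi {ω | Xi ω = true}
    rw [eXM true false, eXM true true, hrel1, ← hq1] at h
    linarith
  -- conditional independence in real form
  have hCIreal : ∀ m a b : Bool,
      (μ {ω | Mi ω = m ∧ Xi ω = a ∧ Xj ω = b}).toReal * (μ {ω | Xi ω = a}).toReal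
        = (μ {ω | Mi ω = m ∧ Xi ω = a}).toReal * (μ {ω | Xi ω = a ∧ Xj ω = b}).toReal := by
    intro m a b
    rw [← ENNReal.toReal_mul, ← ENNReal.toReal_mul, hCI m a b]
  have hc0 : ∀ b : Bool, (μ {ω | Mi ω = false ∧ Xi ω = false ∧ Xj ω = b}).toReal
      = (μ {ω | Xi ω = false ∧ Xj ω = b}).toReal := by
    intro b
    have h := hCIreal false false b
    rw [hm0, ← hq0] at h
    exact mul_right_cancel₀ hq0pos.ne' (by linarith)
  have hc1 : ∀ b : Bool, (μ {ω | Mi ω = false ∧ Xi ω = true ∧ Xj ω = b}).toReal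
      = Real.exp (-εi) * (μ {ω | Xi ω = true ∧ Xj ω = b}).toReal := by
    intro b
    have h := hCIreal false true b
    rw [hm1, ← hq1] at h
    have h2 : (μ {ω | Mi ω = false ∧ Xi ω = true ∧ Xj ω = b}).toReal * q1
        = Real.exp (-εi) * (μ {ω | Xi ω = true ∧ Xj ω = b}).toReal * q1 := by
      rw [h]; ring
    exact mul_right_cancel₀ hq1pos.ne' h2
  -- numerators: μ({Xj=b} ∩ {Mi=false})
  have hn : ∀ b : Bool, (μ ({ω | Xj ω = b} ∩ {ω | Mi ω = false})).toReal
      = (μ {ω | Xi ω = false ∧ Xj ω = b}).toReal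
        + Real.exp (-εi) * (μ {ω | Xi ω = true ∧ Xj ω = b}).toReal := by
    intro b
    rw [← hc0 b, ← hc1 b, ← bool_split_real μ Xi hXi ({ω | Xj ω = b} ∩ {ω | Mi ω = false}),
      eJMX b false false, eJMX b false true]
  have hn0 := hn false
  have hn1 := hn true
  -- denominator μ{Mi = false}
  have htm : (μ {ω | Mi ω = false}).toReal = q0 + Real.exp (-εi) * q1 := by
    rw [← hm0, ← hm1, ← bool_split_real μ Xi hXi {ω | Mi ω = false}, eMX false false,
      eMX false true]
  have hEneg : (0:ℝ) < Real.exp (-εi) := Real.exp_pos _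
  have htpos : 0 < (μ {ω | Mi ω = false}).toReal := by rw [htm]; positivity
  -- condProb δ values
  have hδ1 : condProb μ {ω | Xi ω = false} {ω | Xj ω = false} = p00 / (p00 + p10) := by
    rw [condProb, eXX false false, hr0eq]
  have hδ2 : condProb μ {ω | Xi ω = false} {ω | Xj ω = true} = p01 / (p01 + p11) := by
    rw [condProb, eXX false true, hr1eq]
  -- put everything together
  rw [condProb, condProb, hn0, hn1, hδ1, hδ2, hr0eq, hr1eq, ← hp00, ← hp01, ← hp10, ← hp11]
  have hE : Real.exp (-εi) = (Real.exp εi)⁻¹ := Real.exp_neg εi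
  have hEpos : (0:ℝ) < Real.exp εi := Real.exp_pos _
  have hE1 : (1:ℝ) < Real.exp εi := by linarith [Real.add_one_lt_exp hεi.ne']
  rw [hE]
  -- cancel the common denominator μ{Mi = false}
  have hcancel : ∀ a b c : ℝ, c ≠ 0 → (a / c) / (b / c) = a / b := by
    intro a b c hc; field_simp
  rw [hcancel _ _ _ htpos.ne']
  -- simplify the δ-expressions
  have hA : p00 / (p00 + p10) * (Real.exp εi - 1) + 1
      = (p00 * Real.exp εi + p10) / (p00 + p10) := by
    field_simp
    ring
  have hB : p01 / (p01 + p11) * (Real.exp εi - 1) + 1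
      = (p01 * Real.exp εi + p11) / (p01 + p11) := by
    field_simp
    ring
  rw [hA, hB]
  have hne1 : p00 + p10 ≠ 0 := by positivity
  have hne2 : p01 + p11 ≠ 0 := by positivity
  have hne3 : p01 * Real.exp εi + p11 ≠ 0 := by positivity
  have hne4 : p01 + (Real.exp εi)⁻¹ * p11 ≠ 0 := by positivity
  have hne5 : p00 * Real.exp εi + p10 ≠ 0 := by positivity
  rw [div_div_div_eq, div_mul_div_comm, div_eq_div_iff (by positivity) (by positivity)]
  field_simp
end

section
/- Let μ be a probability measure on Ω, let Xᵢ, Xⱼ be Boolean sensitivity indicators with μ(Xᵢ = a ∧ Xⱼ = b) > 0 for all a, b ∈ {0,1}, and let Mᵢ⁽¹⁾, …, Mᵢ⁽ⁿ⁾ each be release indicators produced by the OSDPRR mechanism with parameter εᵢ > 0 for Xᵢ, which are mutually conditionally independent given Xᵢ and such that the tuple (Mᵢ⁽¹⁾, …, Mᵢ⁽ⁿ⁾) is conditionally independent of Xⱼ given Xᵢ. Set δ₁ = P(Xᵢ = 0 | Xⱼ = 0), δ₂ = P(Xᵢ = 0 | Xⱼ = 1), and let E be the event that Mᵢ⁽ᵏ⁾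 = 0 for all k. Then P(Xⱼ = 0 | E) / P(Xⱼ = 1 | E) = [(δ₁(e^{nεᵢ} − 1) + 1) / (δ₂(e^{nεᵢ} − 1) + 1)] · μ(Xⱼ = 0) / μ(Xⱼ = 1). -/
open MeasureTheory Real

private lemma alg_final (a b c d Dr En : ℝ) (ha : 0 < a) (hb : 0 < b) (hc : 0 < c) (hd : 0 < d)
    (hDr : 0 < Dr) (hEn : 0 < En) :
    ((a + En⁻¹ * b) / Dr) / ((c + En⁻¹ * d) / Dr)
      = ((a / (a + b) * (En - 1) + 1) / (c / (c + d) * (En - 1) + 1)) * ((a + b) / (c + d)) := by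
  have hab : a + b ≠ 0 := by positivity
  have hcd : c + d ≠ 0 := by positivity
  have hN1 : c + En⁻¹ * d ≠ 0 := by positivity
  have hEn' : En ≠ 0 := hEn.ne'
  have hDr' : Dr ≠ 0 := hDr.ne'
  have key : ((a + En⁻¹ * b) / Dr) / ((c + En⁻¹ * d) / Dr) = (a + En⁻¹ * b) / (c + En⁻¹ * d) := by
    rw [div_div_div_comm, div_self hDr', div_one]
  have h1 : a / (a + b) * (En - 1) + 1 = (En * a + b) / (a + b) := by
    field_simp; ring
  have h2 : c / (c + d) * (En - 1) + 1 = (En * c + d) / (c + d) := by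
    field_simp; ring
  have h3 : En * c + d ≠ 0 := by positivity
  rw [key, h1, h2]
  field_simp

private lemma split_bool {Ω : Type*} [MeasurableSpace Ω] (μ : Measure Ω)
    (S : Set Ω) (f : Ω → Bool) (hf : Measurable f) :
    μ S = μ (S ∩ {ω | f ω = false}) + μ (S ∩ {ω | f ω = true}) := by
  have ht : MeasurableSet {ω | f ω = false} := hf (measurableSet_singleton false)
  rw [← measure_inter_add_diff S ht]
  congr 2
  ext ω
  simp [Set.mem_diff]


/-- **Corollary 1, composition over `n` queries.** With
`δ₁ = P(Xᵢ = 0 | Xⱼ = 0)` and `δ₂ = P(Xᵢ = 0 | Xⱼ = 1)`, if record `rᵢ` is not released in any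
of `n` independent OSDPRR queries with parameter `εᵢ` (event `E`), then
`P(Xⱼ=0 | E) / P(Xⱼ=1 | E)
  = [(δ₁(e^{nεᵢ}−1)+1)/(δ₂(e^{nεᵢ}−1)+1)] · P(Xⱼ=0)/P(Xⱼ=1)`. -/
theorem osdprr_dependent_leakage_n_queries {Ω : Type*} [MeasurableSpace Ω]
    (μ : Measure Ω) [IsProbabilityMeasure μ]
    (Xi Xj : Ω → Bool) (hXi : Measurable Xi) (hXj : Measurable Xj)
    (n : ℕ) (M : Fin n → Ω → Bool) (hM : ∀ k, Measurable (M k))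
    (εi : ℝ) (hεi : 0 < εi)
    (hpos : ∀ a b : Bool, 0 < μ {ω | Xi ω = a ∧ Xj ω = b})
    -- each mechanism is an OSDPRR with parameter εᵢ for Xᵢ
    (hrel0 : ∀ k, μ {ω | M k ω = true ∧ Xi ω = false} = 0)
    (hrel1 : ∀ k, (μ {ω | M k ω = true ∧ Xi ω = true}).toReal
        = (1 - Real.exp (-εi)) * (μ {ω | Xi ω = true}).toReal)
    -- mutual conditional independence of the mechanisms given Xᵢ
    (hCI1 : ∀ (m : Fin n → Bool) (a : Bool),
      μ {ω | (∀ k, M k ω = m k) ∧ Xi ω = a} * μ {ω | Xi ω = a} ^ (n - 1)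
        = ∏ k, μ {ω | M k ω = m k ∧ Xi ω = a})
    -- conditional independence of the tuple of mechanisms and Xⱼ given Xᵢ
    (hCI2 : ∀ (m : Fin n → Bool) (a b : Bool),
      μ {ω | (∀ k, M k ω = m k) ∧ Xi ω = a ∧ Xj ω = b} * μ {ω | Xi ω = a}
        = μ {ω | (∀ k, M k ω = m k) ∧ Xi ω = a} * μ {ω | Xi ω = a ∧ Xj ω = b}) :
    condProb μ {ω | Xj ω = false} {ω | ∀ k, M k ω = false}
        / condProb μ {ω | Xj ω = true} {ω | ∀ k, M k ω = false}
      = ((condProb μ {ω | Xi ω = false} {ω | Xj ω = false} * (Real.exp (n * εi) - 1) + 1)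
          / (condProb μ {ω | Xi ω = false} {ω | Xj ω = true} * (Real.exp (n * εi) - 1) + 1))
        * ((μ {ω | Xj ω = false}).toReal / (μ {ω | Xj ω = true}).toReal) := by
  classical
  have hfin : ∀ s : Set Ω, μ s ≠ ⊤ := fun s => measure_ne_top μ s
  -- real-valued joint probabilities
  set p : Bool → Bool → ℝ := fun a b => (μ {ω | Xi ω = a ∧ Xj ω = b}).toReal with hp
  have hpP : ∀ a b, 0 < p a b := fun a b => ENNReal.toReal_pos (hpos a b).ne' (hfin _)
  -- marginals of Xi
  have hpa : ∀ a : Bool, μ {ω | Xi ω = a} =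
      μ {ω | Xi ω = a ∧ Xj ω = false} + μ {ω | Xi ω = a ∧ Xj ω = true} := by
    intro a
    have h := split_bool μ {ω | Xi ω = a} Xj hXj
    have e1 : {ω | Xi ω = a} ∩ {ω | Xj ω = false} = {ω | Xi ω = a ∧ Xj ω = false} := rfl
    have e2 : {ω | Xi ω = a} ∩ {ω | Xj ω = true} = {ω | Xi ω = a ∧ Xj ω = true} := rfl
    rwa [e1, e2] at h
  have hpaR : ∀ a : Bool, (μ {ω | Xi ω = a}).toReal = p a false + p a true := by
    intro a
    rw [hpa a, ENNReal.toReal_add (hfin _) (hfin _)]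
  have hpaP : ∀ a : Bool, 0 < (μ {ω | Xi ω = a}).toReal := by
    intro a; rw [hpaR]; exact add_pos (hpP a false) (hpP a true)
  -- n ≠ 0
  have hn : n ≠ 0 := by
    intro h
    subst h
    have h0 := hCI1 (fun _ => false) false
    have h1 := hCI1 (fun _ => false) true
    simp only [Nat.zero_sub, pow_zero, mul_one, Finset.univ_eq_empty, Finset.prod_empty] at h0 h1
    have e0 : {ω | (∀ k : Fin 0, M k ω = false) ∧ Xi ω = false} = {ω | Xi ω = false} := by
      ext ω; simp
    have e1 : {ω | (∀ k : Fin 0, M k ω = false) ∧ Xi ω = true} = {ω | Xi ω = true} := by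
      ext ω; simp
    rw [e0] at h0
    rw [e1] at h1
    have hd : Disjoint {ω | Xi ω = false} {ω | Xi ω = true} := by
      rw [Set.disjoint_left]; intro ω h1 h2; simp_all
    have hle : μ {ω | Xi ω = false} + μ {ω | Xi ω = true} ≤ 1 := by
      rw [← measure_union hd (hXi (measurableSet_singleton true))]
      exact prob_le_one
    rw [h0, h1] at hle
    norm_num at hle
  have hn1 : n - 1 + 1 = n := Nat.succ_pred_eq_of_pos (Nat.pos_of_ne_zero hn)
  -- per-query facts
  have hM0f : ∀ k, μ {ω | M k ω = false ∧ Xi ω = false} = μ {ω | Xi ω = false} := by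
    intro k
    refine le_antisymm (measure_mono fun ω h => h.2) ?_
    calc μ {ω | Xi ω = false}
        ≤ μ ({ω | M k ω = false ∧ Xi ω = false} ∪ {ω | M k ω = true ∧ Xi ω = false}) := by
          refine measure_mono fun ω h => ?_
          cases hm : M k ω
          · exact Or.inl ⟨hm, h⟩
          · exact Or.inr ⟨hm, h⟩
      _ ≤ μ {ω | M k ω = false ∧ Xi ω = false} + μ {ω | M k ω = true ∧ Xi ω = false} :=
          measure_union_le _ _
      _ = μ {ω | M k ω = false ∧ Xi ω = false} := by rw [hrel0 k, add_zero]
  have hM0t : ∀ k, (μ {ω | M k ω = false ∧ Xi ω = true}).toReal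
      = Real.exp (-εi) * (μ {ω | Xi ω = true}).toReal := by
    intro k
    have h := split_bool μ {ω | Xi ω = true} (M k) (hM k)
    have e1 : {ω | Xi ω = true} ∩ {ω | M k ω = false} = {ω | M k ω = false ∧ Xi ω = true} := by
      ext ω; exact and_comm
    have e2 : {ω | Xi ω = true} ∩ {ω | M k ω = true} = {ω | M k ω = true ∧ Xi ω = true} := by
      ext ω; exact and_comm
    rw [e1, e2] at h
    have hR : (μ {ω | Xi ω = true}).toReal
        = (μ {ω | M k ω = false ∧ Xi ω = true}).toReal
          + (μ {ω | M k ω = true ∧ Xi ω = true}).toReal := by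
      rw [h, ENNReal.toReal_add (hfin _) (hfin _)]
    rw [hrel1 k] at hR
    linarith [hR]
  have hps : ∀ x : ℝ, x ^ n = x * x ^ (n - 1) := fun x => by
    conv_lhs => rw [← hn1]
    rw [pow_succ']
  -- exp identities
  have hexp : Real.exp (-εi) ^ n = Real.exp (-(n * εi)) := by
    rw [← Real.exp_nat_mul]; congr 1; ring
  -- measure of E ∩ {Xi = false}
  have hEf : (μ {ω | (∀ k, M k ω = false) ∧ Xi ω = false}).toReal
      = (μ {ω | Xi ω = false}).toReal := by
    have h : μ {ω | (∀ k, M k ω = false) ∧ Xi ω = false} * μ {ω | Xi ω = false} ^ (n - 1)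
        = ∏ k, μ {ω | M k ω = false ∧ Xi ω = false} := hCI1 (fun _ => false) false
    rw [Finset.prod_congr rfl (fun k _ => hM0f k), Finset.prod_const, Finset.card_univ,
      Fintype.card_fin] at h
    have h2 := congrArg ENNReal.toReal h
    rw [ENNReal.toReal_mul, ENNReal.toReal_pow, ENNReal.toReal_pow] at h2
    have hpne : (μ {ω | Xi ω = false}).toReal ^ (n - 1) ≠ 0 :=
      pow_ne_zero _ (hpaP false).ne'
    refine mul_right_cancel₀ hpne ?_
    rw [h2, hps]
  -- measure of E ∩ {Xi = true}
  have hEt : (μ {ω | (∀ k, M k ω = false) ∧ Xi ω = true}).toReal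
      = Real.exp (-(n * εi)) * (μ {ω | Xi ω = true}).toReal := by
    have h : μ {ω | (∀ k, M k ω = false) ∧ Xi ω = true} * μ {ω | Xi ω = true} ^ (n - 1)
        = ∏ k, μ {ω | M k ω = false ∧ Xi ω = true} := hCI1 (fun _ => false) true
    have h2 := congrArg ENNReal.toReal h
    rw [ENNReal.toReal_mul, ENNReal.toReal_pow, ENNReal.toReal_prod] at h2
    rw [Finset.prod_congr rfl (fun k _ => hM0t k), Finset.prod_const, Finset.card_univ,
      Fintype.card_fin, mul_pow, hexp] at h2
    have hpne : (μ {ω | Xi ω = true}).toReal ^ (n - 1) ≠ 0 :=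
      pow_ne_zero _ (hpaP true).ne'
    refine mul_right_cancel₀ hpne ?_
    rw [h2, hps]
    ring
  -- measure of E ∩ {Xi = a} ∩ {Xj = b}
  have hEab : ∀ b : Bool, (μ {ω | (∀ k, M k ω = false) ∧ Xi ω = false ∧ Xj ω = b}).toReal
      = p false b := by
    intro b
    have h : μ {ω | (∀ k, M k ω = false) ∧ Xi ω = false ∧ Xj ω = b} * μ {ω | Xi ω = false}
        = μ {ω | (∀ k, M k ω = false) ∧ Xi ω = false} * μ {ω | Xi ω = false ∧ Xj ω = b} :=
      hCI2 (fun _ => false) false b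
    have h2 := congrArg ENNReal.toReal h
    rw [ENNReal.toReal_mul, ENNReal.toReal_mul, hEf] at h2
    refine mul_right_cancel₀ (hpaP false).ne' ?_
    rw [h2, hp]
    ring
  have hEab' : ∀ b : Bool, (μ {ω | (∀ k, M k ω = false) ∧ Xi ω = true ∧ Xj ω = b}).toReal
      = Real.exp (-(n * εi)) * p true b := by
    intro b
    have h : μ {ω | (∀ k, M k ω = false) ∧ Xi ω = true ∧ Xj ω = b} * μ {ω | Xi ω = true}
        = μ {ω | (∀ k, M k ω = false) ∧ Xi ω = true} * μ {ω | Xi ω = true ∧ Xj ω = b} :=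
      hCI2 (fun _ => false) true b
    have h2 := congrArg ENNReal.toReal h
    rw [ENNReal.toReal_mul, ENNReal.toReal_mul, hEt] at h2
    refine mul_right_cancel₀ (hpaP true).ne' ?_
    rw [h2, hp]
    ring
  -- measure of {Xj = b} ∩ E
  have hNb : ∀ b : Bool, (μ ({ω | Xj ω = b} ∩ {ω | ∀ k, M k ω = false})).toReal
      = p false b + Real.exp (-(n * εi)) * p true b := by
    intro b
    have h := split_bool μ ({ω | Xj ω = b} ∩ {ω | ∀ k, M k ω = false}) Xi hXi
    have e1 : ({ω | Xj ω = b} ∩ {ω | ∀ k, M k ω = false}) ∩ {ω | Xi ω = false}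
        = {ω | (∀ k, M k ω = false) ∧ Xi ω = false ∧ Xj ω = b} := by
      ext ω; constructor
      · rintro ⟨⟨h1, h2⟩, h3⟩; exact ⟨h2, h3, h1⟩
      · rintro ⟨h1, h2, h3⟩; exact ⟨⟨h3, h1⟩, h2⟩
    have e2 : ({ω | Xj ω = b} ∩ {ω | ∀ k, M k ω = false}) ∩ {ω | Xi ω = true}
        = {ω | (∀ k, M k ω = false) ∧ Xi ω = true ∧ Xj ω = b} := by
      ext ω; constructor
      · rintro ⟨⟨h1, h2⟩, h3⟩; exact ⟨h2, h3, h1⟩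
      · rintro ⟨h1, h2, h3⟩; exact ⟨⟨h3, h1⟩, h2⟩
    rw [e1, e2] at h
    rw [h, ENNReal.toReal_add (hfin _) (hfin _), hEab b, hEab' b]
  -- marginals of Xj
  have hqb : ∀ b : Bool, (μ {ω | Xj ω = b}).toReal = p false b + p true b := by
    intro b
    have h := split_bool μ {ω | Xj ω = b} Xi hXi
    have e1 : {ω | Xj ω = b} ∩ {ω | Xi ω = false} = {ω | Xi ω = false ∧ Xj ω = b} := by
      ext ω; exact and_comm
    have e2 : {ω | Xj ω = b} ∩ {ω | Xi ω = true} = {ω | Xi ω = true ∧ Xj ω = b} := by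
      ext ω; exact and_comm
    rw [e1, e2] at h
    rw [h, ENNReal.toReal_add (hfin _) (hfin _), hp]
  -- positivity of the denominator D = μ E
  have hNpos : ∀ b : Bool, 0 < p false b + Real.exp (-(n * εi)) * p true b := by
    intro b
    have := hpP false b
    have := hpP true b
    have := Real.exp_pos (-(n * εi))
    positivity
  have hD : 0 < (μ {ω | ∀ k, M k ω = false}).toReal := by
    have hle : μ ({ω | Xj ω = false} ∩ {ω | ∀ k, M k ω = false})
        ≤ μ {ω | ∀ k, M k ω = false} := measure_mono Set.inter_subset_right
    have := ENNReal.toReal_mono (hfin _) hle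
    have h0 := hNb false
    have := hNpos false
    linarith
  -- final computation
  simp only [condProb]
  have eI : ∀ b : Bool, {ω | Xi ω = false} ∩ {ω | Xj ω = b} = {ω | Xi ω = false ∧ Xj ω = b} :=
    fun b => rfl
  rw [hNb false, hNb true, eI false, eI true, hqb false, hqb true]
  rw [show (μ {ω | Xi ω = false ∧ Xj ω = false}).toReal = p false false from rfl,
    show (μ {ω | Xi ω = false ∧ Xj ω = true}).toReal = p false true from rfl]
  have hEn : Real.exp (-(n * εi)) = (Real.exp (n * εi))⁻¹ := by
    rw [← Real.exp_neg]
  rw [hEn]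
  exact alg_final _ _ _ _ _ _ (hpP false false) (hpP true false) (hpP false true)
    (hpP true true) hD (Real.exp_pos _)
end

section
/- Let μ be a probability measure on Ω, let Xᵢ, Xⱼ be Boolean sensitivity indicators with μ(Xᵢ = a ∧ Xⱼ = b) > 0 for all a, b ∈ {0,1}. Let Mᵢ be the OSDPRR release indicator with parameter εᵢ > 0 for Xᵢ and Mⱼ the OSDPRR release indicator with parameter εⱼ > 0 for Xⱼ. Assume Mᵢ is conditionally independent of Xⱼ given Xᵢ, and Mⱼ is conditionally independent of Mᵢ given Xⱼ. Set δ₁ = P(Xᵢ = 0 | Xⱼ = 0), δ₂ = P(Xᵢ = 0 | Xⱼ = 1), and f₁(εᵢ) = (δ₁(e^{εᵢ} − 1) + 1)/(δ₂(e^{εᵢ} − 1) + 1). Then P(Xⱼ = 0 | Mᵢ = 0 ∧ Mⱼ = 0) / P(Xⱼ = 1 | Mᵢ = 0 ∧ Mⱼ = 0) = f₁(εᵢ) · e^{εⱼ} · μ(Xⱼ = 0) / μ(Xⱼ = 1). -/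
open MeasureTheory Real

lemma bool_split_aux {Ω : Type*} [MeasurableSpace Ω] (μ : Measure Ω) [IsProbabilityMeasure μ]
    (f : Ω → Bool) (hf : Measurable f) (p : Ω → Prop) :
    (μ {ω | p ω}).toReal
      = (μ {ω | p ω ∧ f ω = false}).toReal + (μ {ω | p ω ∧ f ω = true}).toReal := by
  have ht : MeasurableSet {ω | f ω = true} := hf (measurableSet_singleton true)
  have h := measure_inter_add_diff (μ := μ) {ω | p ω} ht
  have hdiff : {ω | p ω} \ {ω | f ω = true} = {ω | p ω ∧ f ω = false} := by
    ext ω; simp [Set.mem_diff]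
  have hint : {ω | p ω} ∩ {ω | f ω = true} = {ω | p ω ∧ f ω = true} := by
    ext ω; simp
  rw [hdiff, hint] at h
  rw [← h, ENNReal.toReal_add (measure_ne_top μ _) (measure_ne_top μ _), add_comm]

set_option maxHeartbeats 1000000

/-- **Theorem 4, colluding applications, neither record released.** With
`δ₁ = P(Xᵢ = 0 | Xⱼ = 0)`, `δ₂ = P(Xᵢ = 0 | Xⱼ = 1)` and
`f₁(εᵢ) = (δ₁(e^{εᵢ}−1)+1)/(δ₂(e^{εᵢ}−1)+1)`, the posterior odds of `Xⱼ` given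
`Mᵢ = 0, Mⱼ = 0` equal `f₁(εᵢ)·e^{εⱼ}` times the prior odds. -/
theorem osdprr_colluding_both_suppressed {Ω : Type*} [MeasurableSpace Ω]
    (μ : Measure Ω) [IsProbabilityMeasure μ]
    (Xi Xj Mi Mj : Ω → Bool)
    (hXi : Measurable Xi) (hXj : Measurable Xj)
    (hMi : Measurable Mi) (hMj : Measurable Mj)
    (εi εj : ℝ) (hεi : 0 < εi) (hεj : 0 < εj)
    (hpos : ∀ a b : Bool, 0 < μ {ω | Xi ω = a ∧ Xj ω = b})
    -- OSDPRR with parameter εᵢ for Xᵢ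
    (hreli0 : μ {ω | Mi ω = true ∧ Xi ω = false} = 0)
    (hreli1 : (μ {ω | Mi ω = true ∧ Xi ω = true}).toReal
        = (1 - Real.exp (-εi)) * (μ {ω | Xi ω = true}).toReal)
    -- OSDPRR with parameter εⱼ for Xⱼ
    (hrelj0 : μ {ω | Mj ω = true ∧ Xj ω = false} = 0)
    (hrelj1 : (μ {ω | Mj ω = true ∧ Xj ω = true}).toReal
        = (1 - Real.exp (-εj)) * (μ {ω | Xj ω = true}).toReal)
    -- conditional independence of Mᵢ and Xⱼ given Xᵢ
    (hCIi : ∀ m a b : Bool,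
      μ {ω | Mi ω = m ∧ Xi ω = a ∧ Xj ω = b} * μ {ω | Xi ω = a}
        = μ {ω | Mi ω = m ∧ Xi ω = a} * μ {ω | Xi ω = a ∧ Xj ω = b})
    -- conditional independence of Mⱼ and Mᵢ given Xⱼ
    (hCIj : ∀ m m' b : Bool,
      μ {ω | Mj ω = m ∧ Mi ω = m' ∧ Xj ω = b} * μ {ω | Xj ω = b}
        = μ {ω | Mj ω = m ∧ Xj ω = b} * μ {ω | Mi ω = m' ∧ Xj ω = b}) :
    condProb μ {ω | Xj ω = false} {ω | Mi ω = false ∧ Mj ω = false}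
        / condProb μ {ω | Xj ω = true} {ω | Mi ω = false ∧ Mj ω = false}
      = ((condProb μ {ω | Xi ω = false} {ω | Xj ω = false} * (Real.exp εi - 1) + 1)
          / (condProb μ {ω | Xi ω = false} {ω | Xj ω = true} * (Real.exp εi - 1) + 1))
        * Real.exp εj
        * ((μ {ω | Xj ω = false}).toReal / (μ {ω | Xj ω = true}).toReal) := by
  classical
  have hepi : (0:ℝ) < Real.exp εi := Real.exp_pos _
  have hepj : (0:ℝ) < Real.exp εj := Real.exp_pos _
  have hEi : Real.exp (-εi) = (Real.exp εi)⁻¹ := Real.exp_neg εi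
  have hEj : Real.exp (-εj) = (Real.exp εj)⁻¹ := Real.exp_neg εj
  have hposR : ∀ a b : Bool, 0 < (μ {ω | Xi ω = a ∧ Xj ω = b}).toReal := fun a b =>
    ENNReal.toReal_pos (ne_of_gt (hpos a b)) (measure_ne_top μ _)
  -- marginals of Xi
  have hQ : ∀ a : Bool, (μ {ω | Xi ω = a}).toReal
      = (μ {ω | Xi ω = a ∧ Xj ω = false}).toReal + (μ {ω | Xi ω = a ∧ Xj ω = true}).toReal :=
    fun a => bool_split_aux μ Xj hXj (fun ω => Xi ω = a)
  have hQfpos : 0 < (μ {ω | Xi ω = false}).toReal := by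
    rw [hQ false]; exact add_pos (hposR false false) (hposR false true)
  have hQtpos : 0 < (μ {ω | Xi ω = true}).toReal := by
    rw [hQ true]; exact add_pos (hposR true false) (hposR true true)
  -- marginals of Xj
  have hS : ∀ b : Bool, (μ {ω | Xj ω = b}).toReal
      = (μ {ω | Xi ω = false ∧ Xj ω = b}).toReal + (μ {ω | Xi ω = true ∧ Xj ω = b}).toReal := by
    intro b
    have h := bool_split_aux μ Xi hXi (fun ω => Xj ω = b)
    have e1 : {ω | Xj ω = b ∧ Xi ω = false} = {ω | Xi ω = false ∧ Xj ω = b} := by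
      ext ω; simp only [Set.mem_setOf_eq]; tauto
    have e2 : {ω | Xj ω = b ∧ Xi ω = true} = {ω | Xi ω = true ∧ Xj ω = b} := by
      ext ω; simp only [Set.mem_setOf_eq]; tauto
    rw [e1, e2] at h; exact h
  have hSfpos : 0 < (μ {ω | Xj ω = false}).toReal := by
    rw [hS false]; exact add_pos (hposR false false) (hposR true false)
  have hStpos : 0 < (μ {ω | Xj ω = true}).toReal := by
    rw [hS true]; exact add_pos (hposR false true) (hposR true true)
  -- Mi joint with Xi
  have hMiXi : ∀ a : Bool, (μ {ω | Xi ω = a}).toReal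
      = (μ {ω | Mi ω = false ∧ Xi ω = a}).toReal + (μ {ω | Mi ω = true ∧ Xi ω = a}).toReal := by
    intro a
    have h := bool_split_aux μ Mi hMi (fun ω => Xi ω = a)
    have e1 : {ω | Xi ω = a ∧ Mi ω = false} = {ω | Mi ω = false ∧ Xi ω = a} := by
      ext ω; simp only [Set.mem_setOf_eq]; tauto
    have e2 : {ω | Xi ω = a ∧ Mi ω = true} = {ω | Mi ω = true ∧ Xi ω = a} := by
      ext ω; simp only [Set.mem_setOf_eq]; tauto
    rw [e1, e2] at h; exact h
  have hmf : (μ {ω | Mi ω = false ∧ Xi ω = false}).toReal = (μ {ω | Xi ω = false}).toReal := by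
    have h := hMiXi false
    rw [hreli0] at h; simp at h; linarith
  have hmt : (μ {ω | Mi ω = false ∧ Xi ω = true}).toReal
      = Real.exp (-εi) * (μ {ω | Xi ω = true}).toReal := by
    have h := hMiXi true
    rw [hreli1] at h; nlinarith [hQtpos]
  -- Mj joint with Xj
  have hMjXj : ∀ b : Bool, (μ {ω | Xj ω = b}).toReal
      = (μ {ω | Mj ω = false ∧ Xj ω = b}).toReal + (μ {ω | Mj ω = true ∧ Xj ω = b}).toReal := by
    intro b
    have h := bool_split_aux μ Mj hMj (fun ω => Xj ω = b)
    have e1 : {ω | Xj ω = b ∧ Mj ω = false} = {ω | Mj ω = false ∧ Xj ω = b} := by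
      ext ω; simp only [Set.mem_setOf_eq]; tauto
    have e2 : {ω | Xj ω = b ∧ Mj ω = true} = {ω | Mj ω = true ∧ Xj ω = b} := by
      ext ω; simp only [Set.mem_setOf_eq]; tauto
    rw [e1, e2] at h; exact h
  have hnf : (μ {ω | Mj ω = false ∧ Xj ω = false}).toReal = (μ {ω | Xj ω = false}).toReal := by
    have h := hMjXj false
    rw [hrelj0] at h; simp at h; linarith
  have hnt : (μ {ω | Mj ω = false ∧ Xj ω = true}).toReal
      = Real.exp (-εj) * (μ {ω | Xj ω = true}).toReal := by
    have h := hMjXj true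
    rw [hrelj1] at h; nlinarith [hStpos]
  -- CI of Mi and Xj given Xi, real version
  have hCIiR : ∀ a b : Bool, (μ {ω | Mi ω = false ∧ Xi ω = a ∧ Xj ω = b}).toReal
      * (μ {ω | Xi ω = a}).toReal
      = (μ {ω | Mi ω = false ∧ Xi ω = a}).toReal * (μ {ω | Xi ω = a ∧ Xj ω = b}).toReal := by
    intro a b
    have h := congrArg ENNReal.toReal (hCIi false a b)
    rwa [ENNReal.toReal_mul, ENNReal.toReal_mul] at h
  have htf : ∀ b : Bool, (μ {ω | Mi ω = false ∧ Xi ω = false ∧ Xj ω = b}).toReal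
      = (μ {ω | Xi ω = false ∧ Xj ω = b}).toReal := by
    intro b
    have h := hCIiR false b
    rw [hmf] at h
    apply mul_right_cancel₀ (ne_of_gt hQfpos)
    rw [h]; ring
  have htt : ∀ b : Bool, (μ {ω | Mi ω = false ∧ Xi ω = true ∧ Xj ω = b}).toReal
      = Real.exp (-εi) * (μ {ω | Xi ω = true ∧ Xj ω = b}).toReal := by
    intro b
    have h := hCIiR true b
    rw [hmt] at h
    apply mul_right_cancel₀ (ne_of_gt hQtpos)
    rw [h]; ring
  -- Mi joint with Xj
  have hMiXj : ∀ b : Bool, (μ {ω | Mi ω = false ∧ Xj ω = b}).toReal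
      = (μ {ω | Xi ω = false ∧ Xj ω = b}).toReal
        + Real.exp (-εi) * (μ {ω | Xi ω = true ∧ Xj ω = b}).toReal := by
    intro b
    have h := bool_split_aux μ Xi hXi (fun ω => Mi ω = false ∧ Xj ω = b)
    have e1 : {ω | (Mi ω = false ∧ Xj ω = b) ∧ Xi ω = false}
        = {ω | Mi ω = false ∧ Xi ω = false ∧ Xj ω = b} := by
      ext ω; simp only [Set.mem_setOf_eq]; tauto
    have e2 : {ω | (Mi ω = false ∧ Xj ω = b) ∧ Xi ω = true}
        = {ω | Mi ω = false ∧ Xi ω = true ∧ Xj ω = b} := by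
      ext ω; simp only [Set.mem_setOf_eq]; tauto
    rw [e1, e2, htf b, htt b] at h
    exact h
  -- CI of Mj and Mi given Xj, real version
  have hCIjR : ∀ b : Bool, (μ {ω | Mj ω = false ∧ Mi ω = false ∧ Xj ω = b}).toReal
      * (μ {ω | Xj ω = b}).toReal
      = (μ {ω | Mj ω = false ∧ Xj ω = b}).toReal * (μ {ω | Mi ω = false ∧ Xj ω = b}).toReal := by
    intro b
    have h := congrArg ENNReal.toReal (hCIj false false b)
    rwa [ENNReal.toReal_mul, ENNReal.toReal_mul] at h
  have hNf : (μ {ω | Mj ω = false ∧ Mi ω = false ∧ Xj ω = false}).toReal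
      = (μ {ω | Xi ω = false ∧ Xj ω = false}).toReal
        + Real.exp (-εi) * (μ {ω | Xi ω = true ∧ Xj ω = false}).toReal := by
    have h := hCIjR false
    rw [hnf, hMiXj false] at h
    apply mul_right_cancel₀ (ne_of_gt hSfpos)
    rw [h]; ring
  have hNt : (μ {ω | Mj ω = false ∧ Mi ω = false ∧ Xj ω = true}).toReal
      = Real.exp (-εj) * ((μ {ω | Xi ω = false ∧ Xj ω = true}).toReal
        + Real.exp (-εi) * (μ {ω | Xi ω = true ∧ Xj ω = true}).toReal) := by
    have h := hCIjR true
    rw [hnt, hMiXj true] at h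
    apply mul_right_cancel₀ (ne_of_gt hStpos)
    rw [h]; ring
  -- total measure of Mi = 0, Mj = 0
  have hD : (μ {ω | Mi ω = false ∧ Mj ω = false}).toReal
      = ((μ {ω | Xi ω = false ∧ Xj ω = false}).toReal
          + Real.exp (-εi) * (μ {ω | Xi ω = true ∧ Xj ω = false}).toReal)
        + Real.exp (-εj) * ((μ {ω | Xi ω = false ∧ Xj ω = true}).toReal
          + Real.exp (-εi) * (μ {ω | Xi ω = true ∧ Xj ω = true}).toReal) := by
    have h := bool_split_aux μ Xj hXj (fun ω => Mi ω = false ∧ Mj ω = false)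
    have e1 : {ω | (Mi ω = false ∧ Mj ω = false) ∧ Xj ω = false}
        = {ω | Mj ω = false ∧ Mi ω = false ∧ Xj ω = false} := by
      ext ω; simp only [Set.mem_setOf_eq]; tauto
    have e2 : {ω | (Mi ω = false ∧ Mj ω = false) ∧ Xj ω = true}
        = {ω | Mj ω = false ∧ Mi ω = false ∧ Xj ω = true} := by
      ext ω; simp only [Set.mem_setOf_eq]; tauto
    rw [e1, e2, hNf, hNt] at h
    exact h
  -- rewrite the condProb terms
  have ecf : {ω | Xj ω = false} ∩ {ω | Mi ω = false ∧ Mj ω = false}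
      = {ω | Mj ω = false ∧ Mi ω = false ∧ Xj ω = false} := by
    ext ω; simp only [Set.mem_inter_iff, Set.mem_setOf_eq]; tauto
  have ect : {ω | Xj ω = true} ∩ {ω | Mi ω = false ∧ Mj ω = false}
      = {ω | Mj ω = false ∧ Mi ω = false ∧ Xj ω = true} := by
    ext ω; simp only [Set.mem_inter_iff, Set.mem_setOf_eq]; tauto
  have eif : {ω | Xi ω = false} ∩ {ω | Xj ω = false}
      = {ω | Xi ω = false ∧ Xj ω = false} := by
    ext ω; simp only [Set.mem_inter_iff, Set.mem_setOf_eq]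
  have eit : {ω | Xi ω = false} ∩ {ω | Xj ω = true}
      = {ω | Xi ω = false ∧ Xj ω = true} := by
    ext ω; simp only [Set.mem_inter_iff, Set.mem_setOf_eq]
  rw [condProb, condProb, condProb, condProb, ecf, ect, eif, eit, hNf, hNt, hD,
    hS false, hS true, hEi, hEj]
  -- now pure algebra
  have Aff := hposR false false
  have Atf := hposR true false
  have Aft := hposR false true
  have Att := hposR true true
  have h1e : (1:ℝ) < Real.exp εi := by
    have := Real.exp_lt_exp.mpr hεi
    simpa [Real.exp_zero] using this
  set a := (μ {ω | Xi ω = false ∧ Xj ω = false}).toReal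
  set b := (μ {ω | Xi ω = true ∧ Xj ω = false}).toReal
  set c := (μ {ω | Xi ω = false ∧ Xj ω = true}).toReal
  set d := (μ {ω | Xi ω = true ∧ Xj ω = true}).toReal
  set ei := Real.exp εi
  set ej := Real.exp εj
  have hsf : (0:ℝ) < a + b := by linarith
  have hst : (0:ℝ) < c + d := by linarith
  have heip : (0:ℝ) < ei⁻¹ := by positivity
  have hejp : (0:ℝ) < ej⁻¹ := by positivity
  have hNfp : (0:ℝ) < a + ei⁻¹ * b := add_pos Aff (mul_pos heip Atf)
  have hNtp : (0:ℝ) < c + ei⁻¹ * d := add_pos Aft (mul_pos heip Att)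
  have hDp : (0:ℝ) < (a + ei⁻¹ * b) + ej⁻¹ * (c + ei⁻¹ * d) :=
    add_pos hNfp (mul_pos hejp hNtp)
  have hGpos : (0:ℝ) < ej * (ei * a + b) + (ei * c + d) := by
    have : (0:ℝ) < ei * a + b := by nlinarith
    have : (0:ℝ) < ei * c + d := by nlinarith
    nlinarith
  have hXp : (0:ℝ) < ei * a + b := by nlinarith
  have hYp : (0:ℝ) < ei * c + d := by nlinarith
  have kD : (a + ei⁻¹ * b) + ej⁻¹ * (c + ei⁻¹ * d)
      = ei⁻¹ * ej⁻¹ * (ej * (ei * a + b) + (ei * c + d)) := by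
    field_simp
  have ka : a + ei⁻¹ * b = ei⁻¹ * (ei * a + b) := by field_simp
  have kc : c + ei⁻¹ * d = ei⁻¹ * (ei * c + d) := by field_simp
  have r1 : a / (a + b) * (ei - 1) + 1 = (ei * a + b) / (a + b) := by
    field_simp; ring
  have r2 : c / (c + d) * (ei - 1) + 1 = (ei * c + d) / (c + d) := by
    field_simp; ring
  rw [kD, ka, kc, r1, r2]
  field_simp
end

section
/- Let μ be a probability measure on Ω, let Xᵢ, Xⱼ be Boolean sensitivity indicators with μ(Xᵢ = a ∧ Xⱼ = b) > 0 for all a, b ∈ {0,1}. Let Mᵢ be the OSDPRR release indicator with parameter εᵢ > 0 for Xᵢ and Mⱼ the OSDPRR release indicator with parameter εⱼ > 0 for Xⱼ. Assume Mᵢ is conditionally independent of Xⱼ given Xᵢ, and Mⱼ is conditionally independent of Mᵢ given Xⱼ. Set δ₁ = P(Xᵢ = 0 | Xⱼ = 0), δ₂ = P(Xᵢ = 0 | Xⱼ = 1), and f₂ = (1 − δ₁)/(1 − δ₂). Then P(Xⱼ = 0 | Mᵢ = 1 ∧ Mⱼ = 0) / P(Xⱼ = 1 | Mᵢ = 1 ∧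 Mⱼ = 0) = f₂ · e^{εⱼ} · μ(Xⱼ = 0) / μ(Xⱼ = 1). -/
open MeasureTheory Real

/-- **Theorem 4, colluding applications, rᵢ released, rⱼ suppressed.** With
`δ₁ = P(Xᵢ = 0 | Xⱼ = 0)`, `δ₂ = P(Xᵢ = 0 | Xⱼ = 1)` and `f₂ = (1−δ₁)/(1−δ₂)`, the posterior
odds of `Xⱼ` given `Mᵢ = 1, Mⱼ = 0` equal `f₂·e^{εⱼ}` times the prior odds. -/
theorem osdprr_colluding_released_suppressed {Ω : Type*} [MeasurableSpace Ω]
    (μ : Measure Ω) [IsProbabilityMeasure μ]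
    (Xi Xj Mi Mj : Ω → Bool)
    (hXi : Measurable Xi) (hXj : Measurable Xj)
    (hMi : Measurable Mi) (hMj : Measurable Mj)
    (εi εj : ℝ) (hεi : 0 < εi) (hεj : 0 < εj)
    (hpos : ∀ a b : Bool, 0 < μ {ω | Xi ω = a ∧ Xj ω = b})
    -- OSDPRR with parameter εᵢ for Xᵢ
    (hreli0 : μ {ω | Mi ω = true ∧ Xi ω = false} = 0)
    (hreli1 : (μ {ω | Mi ω = true ∧ Xi ω = true}).toReal
        = (1 - Real.exp (-εi)) * (μ {ω | Xi ω = true}).toReal)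
    -- OSDPRR with parameter εⱼ for Xⱼ
    (hrelj0 : μ {ω | Mj ω = true ∧ Xj ω = false} = 0)
    (hrelj1 : (μ {ω | Mj ω = true ∧ Xj ω = true}).toReal
        = (1 - Real.exp (-εj)) * (μ {ω | Xj ω = true}).toReal)
    -- conditional independence of Mᵢ and Xⱼ given Xᵢ
    (hCIi : ∀ m a b : Bool,
      μ {ω | Mi ω = m ∧ Xi ω = a ∧ Xj ω = b} * μ {ω | Xi ω = a}
        = μ {ω | Mi ω = m ∧ Xi ω = a} * μ {ω | Xi ω = a ∧ Xj ω = b})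
    -- conditional independence of Mⱼ and Mᵢ given Xⱼ
    (hCIj : ∀ m m' b : Bool,
      μ {ω | Mj ω = m ∧ Mi ω = m' ∧ Xj ω = b} * μ {ω | Xj ω = b}
        = μ {ω | Mj ω = m ∧ Xj ω = b} * μ {ω | Mi ω = m' ∧ Xj ω = b}) :
    condProb μ {ω | Xj ω = false} {ω | Mi ω = true ∧ Mj ω = false}
        / condProb μ {ω | Xj ω = true} {ω | Mi ω = true ∧ Mj ω = false}
      = ((1 - condProb μ {ω | Xi ω = false} {ω | Xj ω = false})
          / (1 - condProb μ {ω | Xi ω = false} {ω | Xj ω = true}))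
        * Real.exp εj
        * ((μ {ω | Xj ω = false}).toReal / (μ {ω | Xj ω = true}).toReal) := by
  classical
  have hfin : ∀ s : Set Ω, μ s ≠ ⊤ := fun s => measure_ne_top μ s
  have msing : ∀ (f : Ω → Bool), Measurable f → ∀ b : Bool, MeasurableSet {ω | f ω = b} :=
    fun f hf b => hf (MeasurableSet.singleton b)
  -- additivity helper in ℝ
  have hadd : ∀ s t u : Set Ω, MeasurableSet u → s = t ∪ u → Disjoint t u →
      (μ s).toReal = (μ t).toReal + (μ u).toReal := by
    intro s t u hu hsu hdis
    rw [hsu, measure_union hdis hu, ENNReal.toReal_add (hfin t) (hfin u)]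
  -- positivity of the four cells
  have hpR : ∀ a b : Bool, 0 < (μ {ω | Xi ω = a ∧ Xj ω = b}).toReal :=
    fun a b => ENNReal.toReal_pos (hpos a b).ne' (hfin _)
  -- split {Xj = b} over Xi
  have hq : ∀ b : Bool, (μ {ω | Xj ω = b}).toReal
      = (μ {ω | Xi ω = false ∧ Xj ω = b}).toReal + (μ {ω | Xi ω = true ∧ Xj ω = b}).toReal := by
    intro b
    refine hadd _ _ _ ((msing Xi hXi true).inter (msing Xj hXj b)) ?_ ?_
    · ext ω
      simp only [Set.mem_setOf_eq, Set.mem_union]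
      rcases Bool.dichotomy (Xi ω) with hx | hx <;> simp [hx]
    · rw [Set.disjoint_left]
      rintro ω ⟨h1, -⟩ ⟨h2, -⟩
      rw [h1] at h2; exact Bool.noConfusion h2
  have hqpos : ∀ b : Bool, 0 < (μ {ω | Xj ω = b}).toReal := by
    intro b; rw [hq b]; have := hpR false b; have := hpR true b; linarith
  -- C := μ(Xi = true), split over Xj
  have hC : (μ {ω | Xi ω = true}).toReal
      = (μ {ω | Xi ω = true ∧ Xj ω = false}).toReal + (μ {ω | Xi ω = true ∧ Xj ω = true}).toReal := by
    refine hadd _ _ _ ((msing Xi hXi true).inter (msing Xj hXj true)) ?_ ?_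
    · ext ω
      simp only [Set.mem_setOf_eq, Set.mem_union]
      rcases Bool.dichotomy (Xj ω) with hx | hx <;> simp [hx]
    · rw [Set.disjoint_left]
      rintro ω ⟨-, h1⟩ ⟨-, h2⟩
      rw [h1] at h2; exact Bool.noConfusion h2
  have hCpos : 0 < (μ {ω | Xi ω = true}).toReal := by
    rw [hC]; have := hpR true false; have := hpR true true; linarith
  -- CI for Mi in reals
  have hCIiR : ∀ b : Bool, (μ {ω | Mi ω = true ∧ Xi ω = true ∧ Xj ω = b}).toReal
      * (μ {ω | Xi ω = true}).toReal
      = (μ {ω | Mi ω = true ∧ Xi ω = true}).toReal * (μ {ω | Xi ω = true ∧ Xj ω = b}).toReal := by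
    intro b
    have := congrArg ENNReal.toReal (hCIi true true b)
    rwa [ENNReal.toReal_mul, ENNReal.toReal_mul] at this
  -- μ(Mi=1 ∧ Xi=1 ∧ Xj=b) = (1 - e^{-εi}) μ(Xi=1 ∧ Xj=b)
  have hBi : ∀ b : Bool, (μ {ω | Mi ω = true ∧ Xi ω = true ∧ Xj ω = b}).toReal
      = (1 - Real.exp (-εi)) * (μ {ω | Xi ω = true ∧ Xj ω = b}).toReal := by
    intro b
    have h := hCIiR b
    rw [hreli1] at h
    refine mul_right_cancel₀ (ne_of_gt hCpos) (h.trans ?_)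
    ring
  -- μ(Mi=1 ∧ Xj=b) = (1 - e^{-εi}) μ(Xi=1 ∧ Xj=b)
  have hai : ∀ b : Bool, (μ {ω | Mi ω = true ∧ Xj ω = b}).toReal
      = (1 - Real.exp (-εi)) * (μ {ω | Xi ω = true ∧ Xj ω = b}).toReal := by
    intro b
    have hz : (μ {ω | Mi ω = true ∧ Xi ω = false ∧ Xj ω = b}).toReal = 0 := by
      have hsub : {ω | Mi ω = true ∧ Xi ω = false ∧ Xj ω = b} ⊆ {ω | Mi ω = true ∧ Xi ω = false} :=
        fun ω h => ⟨h.1, h.2.1⟩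
      have : μ {ω | Mi ω = true ∧ Xi ω = false ∧ Xj ω = b} = 0 :=
        measure_mono_null hsub hreli0
      simp [this]
    have hsplit : (μ {ω | Mi ω = true ∧ Xj ω = b}).toReal
        = (μ {ω | Mi ω = true ∧ Xi ω = false ∧ Xj ω = b}).toReal
          + (μ {ω | Mi ω = true ∧ Xi ω = true ∧ Xj ω = b}).toReal := by
      refine hadd _ _ _ ((msing Mi hMi true).inter ((msing Xi hXi true).inter (msing Xj hXj b))) ?_ ?_
      · ext ω
        simp only [Set.mem_setOf_eq, Set.mem_union]
        rcases Bool.dichotomy (Xi ω) with hx | hx <;> simp [hx]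
      · rw [Set.disjoint_left]
        rintro ω ⟨-, h1, -⟩ ⟨-, h2, -⟩
        rw [h1] at h2; exact Bool.noConfusion h2
    rw [hsplit, hz, zero_add, hBi b]
  -- μ(Mj=0 ∧ Xj=0) = μ(Xj=0)
  have hMjf : (μ {ω | Mj ω = false ∧ Xj ω = false}).toReal = (μ {ω | Xj ω = false}).toReal := by
    have hz : (μ {ω | Mj ω = true ∧ Xj ω = false}).toReal = 0 := by simp [hrelj0]
    have hsplit : (μ {ω | Xj ω = false}).toReal
        = (μ {ω | Mj ω = false ∧ Xj ω = false}).toReal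
          + (μ {ω | Mj ω = true ∧ Xj ω = false}).toReal := by
      refine hadd _ _ _ ((msing Mj hMj true).inter (msing Xj hXj false)) ?_ ?_
      · ext ω
        simp only [Set.mem_setOf_eq, Set.mem_union]
        rcases Bool.dichotomy (Mj ω) with hx | hx <;> simp [hx]
      · rw [Set.disjoint_left]
        rintro ω ⟨h1, -⟩ ⟨h2, -⟩
        rw [h1] at h2; exact Bool.noConfusion h2
    rw [hsplit, hz, add_zero]
  -- μ(Mj=0 ∧ Xj=1) = e^{-εj} μ(Xj=1)
  have hMjt : (μ {ω | Mj ω = false ∧ Xj ω = true}).toReal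
      = Real.exp (-εj) * (μ {ω | Xj ω = true}).toReal := by
    have hsplit : (μ {ω | Xj ω = true}).toReal
        = (μ {ω | Mj ω = false ∧ Xj ω = true}).toReal
          + (μ {ω | Mj ω = true ∧ Xj ω = true}).toReal := by
      refine hadd _ _ _ ((msing Mj hMj true).inter (msing Xj hXj true)) ?_ ?_
      · ext ω
        simp only [Set.mem_setOf_eq, Set.mem_union]
        rcases Bool.dichotomy (Mj ω) with hx | hx <;> simp [hx]
      · rw [Set.disjoint_left]
        rintro ω ⟨h1, -⟩ ⟨h2, -⟩
        rw [h1] at h2; exact Bool.noConfusion h2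
    rw [hrelj1] at hsplit
    linarith
  -- CI for Mj in reals
  have hCIjR : ∀ b : Bool, (μ {ω | Mj ω = false ∧ Mi ω = true ∧ Xj ω = b}).toReal
      * (μ {ω | Xj ω = b}).toReal
      = (μ {ω | Mj ω = false ∧ Xj ω = b}).toReal * (μ {ω | Mi ω = true ∧ Xj ω = b}).toReal := by
    intro b
    have := congrArg ENNReal.toReal (hCIj false true b)
    rwa [ENNReal.toReal_mul, ENNReal.toReal_mul] at this
  -- the two key triple-set values
  have hc0 : (μ {ω | Mj ω = false ∧ Mi ω = true ∧ Xj ω = false}).toReal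
      = (1 - Real.exp (-εi)) * (μ {ω | Xi ω = true ∧ Xj ω = false}).toReal := by
    have h := hCIjR false
    rw [hMjf, hai false] at h
    refine mul_right_cancel₀ (ne_of_gt (hqpos false)) (h.trans ?_)
    ring
  have hc1 : (μ {ω | Mj ω = false ∧ Mi ω = true ∧ Xj ω = true}).toReal
      = Real.exp (-εj) * ((1 - Real.exp (-εi)) * (μ {ω | Xi ω = true ∧ Xj ω = true}).toReal) := by
    have h := hCIjR true
    rw [hMjt, hai true] at h
    refine mul_right_cancel₀ (ne_of_gt (hqpos true)) (h.trans ?_)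
    ring
  -- positivity of 1 - e^{-εi}
  have hE : 0 < 1 - Real.exp (-εi) := by
    have : Real.exp (-εi) < 1 := Real.exp_lt_one_iff.mpr (neg_neg_of_pos hεi)
    linarith
  -- positivity of μ(B)
  have hBpos : 0 < (μ {ω | Mi ω = true ∧ Mj ω = false}).toReal := by
    have hsub : {ω | Mj ω = false ∧ Mi ω = true ∧ Xj ω = true} ⊆ {ω | Mi ω = true ∧ Mj ω = false} :=
      fun ω h => ⟨h.2.1, h.1⟩
    have hle : (μ {ω | Mj ω = false ∧ Mi ω = true ∧ Xj ω = true}).toReal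
        ≤ (μ {ω | Mi ω = true ∧ Mj ω = false}).toReal :=
      ENNReal.toReal_mono (hfin _) (measure_mono hsub)
    have h1 : 0 < (μ {ω | Mj ω = false ∧ Mi ω = true ∧ Xj ω = true}).toReal := by
      rw [hc1]
      exact mul_pos (Real.exp_pos _) (mul_pos hE (hpR true true))
    linarith
  -- rewrite the goal's intersections as the triple sets
  have eA0 : {ω | Xj ω = false} ∩ {ω | Mi ω = true ∧ Mj ω = false}
      = {ω | Mj ω = false ∧ Mi ω = true ∧ Xj ω = false} := by
    ext ω; simp only [Set.mem_inter_iff, Set.mem_setOf_eq]; tauto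
  have eA1 : {ω | Xj ω = true} ∩ {ω | Mi ω = true ∧ Mj ω = false}
      = {ω | Mj ω = false ∧ Mi ω = true ∧ Xj ω = true} := by
    ext ω; simp only [Set.mem_inter_iff, Set.mem_setOf_eq]; tauto
  have eD0 : {ω | Xi ω = false} ∩ {ω | Xj ω = false} = {ω | Xi ω = false ∧ Xj ω = false} := rfl
  have eD1 : {ω | Xi ω = false} ∩ {ω | Xj ω = true} = {ω | Xi ω = false ∧ Xj ω = true} := rfl
  simp only [condProb, eA0, eA1, eD0, eD1, hc0, hc1]
  have hq0 := hq false
  have hq1 := hq true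
  have h1 := hpR false false
  have h2 := hpR true false
  have h3 := hpR false true
  have h4 := hpR true true
  have hq0p := hqpos false
  have hq1p := hqpos true
  have hej := Real.exp_pos (-εj)
  have hejj := Real.exp_pos εj
  have hexpinv : Real.exp (-εj) = (Real.exp εj)⁻¹ := Real.exp_neg εj
  rw [hexpinv]
  rw [hq0, hq1]
  field_simp
  ring
  field_simp
end

section
/- Let μ be a probability measure on Ω, let X be the Boolean sensitivity indicator of a record with θ = μ(X = 0) satisfying 0 < θ < 1, and let M be the release indicator produced by the OSDPRR mechanism with parameter ε > 0 for X. Define the mutual information I(X; M) = Σ_{x,m ∈ {0,1}} μ(X = x ∧ M = m) · log( μ(X = x ∧ M = m) / (μ(X = x)·μ(M = m)) ), with the convention that terms with μ(X = x ∧ M = m) = 0 contribute 0. Then I(X; M) = H₂(θ) − (θ + e^{−ε}(1 − θ)) · H₂( θ / (θ + e^{−ε}(1 − θ)) ), where H₂(p) = −p·log p − (1 − p)·log(1 − p) is the binary entropy function. -/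
open MeasureTheory Real

/-- The binary entropy function `H₂(p) = −p·log p − (1 − p)·log(1 − p)`
(with the convention `0 · log 0 = 0`, which holds automatically since `Real.log 0 = 0`). -/
noncomputable def binEnt (p : ℝ) : ℝ :=
  -p * Real.log p - (1 - p) * Real.log (1 - p)

lemma key_alg (θ η : ℝ) (h0 : 0 < θ) (h1 : θ < 1) (hη0 : 0 < η) (hη1 : η < 1) :
    θ * Real.log (θ / (θ * (θ + η * (1 - θ))))
      + (η * (1 - θ)) * Real.log ((η * (1 - θ)) / ((1 - θ) * (θ + η * (1 - θ))))
      + ((1 - η) * (1 - θ)) *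
          Real.log (((1 - η) * (1 - θ)) / ((1 - θ) * ((1 - η) * (1 - θ))))
    = (-θ * Real.log θ - (1 - θ) * Real.log (1 - θ))
      - (θ + η * (1 - θ)) *
        (-(θ / (θ + η * (1 - θ))) * Real.log (θ / (θ + η * (1 - θ)))
          - (1 - θ / (θ + η * (1 - θ))) * Real.log (1 - θ / (θ + η * (1 - θ)))) := by
  set q : ℝ := θ + η * (1 - θ) with hq
  have h1θ : 0 < 1 - θ := by linarith
  have h1η : 0 < 1 - η := by linarith
  have hq0 : 0 < q := by positivity
  have e1 : θ / (θ * q) = q⁻¹ := by field_simp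
  have e2 : (η * (1 - θ)) / ((1 - θ) * q) = η / q := by field_simp
  have e3 : ((1 - η) * (1 - θ)) / ((1 - θ) * ((1 - η) * (1 - θ))) = (1 - θ)⁻¹ := by
    field_simp
  have e4 : 1 - θ / q = η * (1 - θ) / q := by field_simp; ring
  rw [e1, e2, e3, e4, Real.log_inv, Real.log_inv, Real.log_div hη0.ne' hq0.ne',
    Real.log_div h0.ne' hq0.ne', Real.log_div (by positivity) hq0.ne',
    Real.log_mul hη0.ne' h1θ.ne']
  field_simp
  ring

/-- **mutual information between X and M under OSDPRR.** With
`θ = P(X = 0) ∈ (0,1)`, the mutual information between the sensitivity indicator `X` and the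
OSDPRR release indicator `M` with parameter `ε > 0` is
`I(X; M) = H₂(θ) − (θ + e^{−ε}(1 − θ)) · H₂(θ / (θ + e^{−ε}(1 − θ)))`.
Terms of the defining sum with zero joint probability contribute `0` automatically since
`Real.log 0 = 0`. -/
theorem osdprr_mutual_information {Ω : Type*} [MeasurableSpace Ω]
    (μ : Measure Ω) [IsProbabilityMeasure μ]
    (X M : Ω → Bool) (hXmeas : Measurable X) (hMmeas : Measurable M)
    (ε : ℝ) (hε : 0 < ε)
    (θ : ℝ) (hθdef : θ = (μ {ω | X ω = false}).toReal)
    (hθ0 : 0 < θ) (hθ1 : θ < 1)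
    -- OSDPRR: a sensitive record is never released
    (hrel0 : μ {ω | M ω = true ∧ X ω = false} = 0)
    -- OSDPRR: a non-sensitive record is released with probability 1 - e^{-ε}
    (hrel1 : (μ {ω | M ω = true ∧ X ω = true}).toReal
        = (1 - Real.exp (-ε)) * (μ {ω | X ω = true}).toReal) :
    (∑ x : Bool, ∑ m : Bool,
        (μ {ω | X ω = x ∧ M ω = m}).toReal *
          Real.log ((μ {ω | X ω = x ∧ M ω = m}).toReal
            / ((μ {ω | X ω = x}).toReal * (μ {ω | M ω = m}).toReal)))
      = binEnt θ
        - (θ + Real.exp (-ε) * (1 - θ))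
            * binEnt (θ / (θ + Real.exp (-ε) * (1 - θ))) := by
  set η : ℝ := Real.exp (-ε) with hηdef
  have hη0 : 0 < η := Real.exp_pos _
  have hη1 : η < 1 := by
    rw [hηdef, Real.exp_lt_one_iff]; linarith
  -- measurability of the basic sets
  have hmXF : MeasurableSet {ω | X ω = false} := hXmeas (MeasurableSet.singleton false)
  have hmXT : MeasurableSet {ω | X ω = true} := hXmeas (MeasurableSet.singleton true)
  have hmMT : MeasurableSet {ω | M ω = true} := hMmeas (MeasurableSet.singleton true)
  have hne : ∀ s : Set Ω, μ s ≠ ⊤ := fun s => measure_ne_top μ s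
  -- P(X = true) = 1 - θ
  have hcompX : {ω | X ω = true} = {ω | X ω = false}ᶜ := by ext ω; simp
  have hXT : (μ {ω | X ω = true}).toReal = 1 - θ := by
    rw [hcompX, measure_compl hmXF (hne _), measure_univ,
      ENNReal.toReal_sub_of_le (prob_le_one) ENNReal.one_ne_top, ENNReal.toReal_one, hθdef]
  -- joint: (false, true) has probability 0
  have hFT : μ {ω | X ω = false ∧ M ω = true} = 0 := by
    rw [show {ω | X ω = false ∧ M ω = true} = {ω | M ω = true ∧ X ω = false} from by
      ext ω; exact and_comm]
    exact hrel0
  -- joint: (false, false) has probability θ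
  have hsplitF : μ ({ω | X ω = false} ∩ {ω | M ω = true})
      + μ ({ω | X ω = false} \ {ω | M ω = true}) = μ {ω | X ω = false} :=
    measure_inter_add_diff _ hmMT
  have hiFT : {ω | X ω = false} ∩ {ω | M ω = true} = {ω | X ω = false ∧ M ω = true} := by
    ext ω; simp [Set.mem_inter_iff]
  have hiFF : {ω | X ω = false} \ {ω | M ω = true} = {ω | X ω = false ∧ M ω = false} := by
    ext ω; simp
  have hFF : (μ {ω | X ω = false ∧ M ω = false}).toReal = θ := by
    rw [hiFT, hiFF, hFT, zero_add] at hsplitF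
    rw [hsplitF, hθdef]
  -- joint: (true, true)
  have hTT : (μ {ω | X ω = true ∧ M ω = true}).toReal = (1 - η) * (1 - θ) := by
    rw [show {ω | X ω = true ∧ M ω = true} = {ω | M ω = true ∧ X ω = true} from by
      ext ω; exact and_comm]
    rw [hrel1, hXT]
  -- joint: (true, false)
  have hsplitT : μ ({ω | X ω = true} ∩ {ω | M ω = true})
      + μ ({ω | X ω = true} \ {ω | M ω = true}) = μ {ω | X ω = true} :=
    measure_inter_add_diff _ hmMT
  have hiTT : {ω | X ω = true} ∩ {ω | M ω = true} = {ω | X ω = true ∧ M ω = true} := by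
    ext ω; simp [Set.mem_inter_iff]
  have hiTF : {ω | X ω = true} \ {ω | M ω = true} = {ω | X ω = true ∧ M ω = false} := by
    ext ω; simp
  have hTF : (μ {ω | X ω = true ∧ M ω = false}).toReal = η * (1 - θ) := by
    rw [hiTT, hiTF] at hsplitT
    have := congrArg ENNReal.toReal hsplitT
    rw [ENNReal.toReal_add (hne _) (hne _), hTT, hXT] at this
    linarith
  -- P(M = true)
  have hsplitM : μ ({ω | M ω = true} ∩ {ω | X ω = false})
      + μ ({ω | M ω = true} \ {ω | X ω = false}) = μ {ω | M ω = true} :=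
    measure_inter_add_diff _ hmXF
  have hiMF : {ω | M ω = true} ∩ {ω | X ω = false} = {ω | M ω = true ∧ X ω = false} := by
    ext ω; simp [Set.mem_inter_iff]
  have hiMT : {ω | M ω = true} \ {ω | X ω = false} = {ω | X ω = true ∧ M ω = true} := by
    ext ω; simp [and_comm]
  have hMT : (μ {ω | M ω = true}).toReal = (1 - η) * (1 - θ) := by
    rw [hiMF, hiMT, hrel0, zero_add] at hsplitM
    rw [← hsplitM, hTT]
  -- P(M = false)
  have hcompM : {ω | M ω = false} = {ω | M ω = true}ᶜ := by ext ω; simp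
  have hMF : (μ {ω | M ω = false}).toReal = θ + η * (1 - θ) := by
    rw [hcompM, measure_compl hmMT (hne _), measure_univ,
      ENNReal.toReal_sub_of_le (prob_le_one) ENNReal.one_ne_top, ENNReal.toReal_one, hMT]
    ring
  have hFT' : (μ {ω | X ω = false ∧ M ω = true}).toReal = 0 := by rw [hFT]; simp
  rw [Fintype.sum_bool]
  rw [Fintype.sum_bool, Fintype.sum_bool]
  rw [hFT', hFF, hTT, hTF, hMT, hMF, hXT, hθdef.symm, zero_mul]
  have key := key_alg θ η hθ0 hθ1 hη0 hη1
  unfold binEnt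
  linarith [key]
end
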